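/- arXiv:2002.00794 — 12 statements merged into one kernel-verified Lean document; each statement's English description precedes it below -/
import Mathlib

section
/- Let 𝒜 be a commutative associative algebra over a field F with char F ≠ 2 and let Δ be a derivation of 𝒜 (a linear map with Δ(ab) = Δ(a)b + aΔ(b)). Define a∘_Δ b = aΔ(b) + bΔ(a). Then (𝒜, ∘_Δ) is a Jordan algebra if and only if Δ(b·a²·Δ²(a)) = 0 for all a, b ∈ 𝒜. -/
/-- A Jordan algebra structure: a commutative bilinear multiplication `m`
satisfying the Jordan identity `(x∘x)∘(y∘x) = ((x∘x)∘y)∘x`. -/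
structure IsJordanMul (F : Type*) [Field F] {A : Type*} [AddCommGroup A]
    [Module F A] (m : A → A → A) : Prop where
  add_left : ∀ x y z : A, m (x + y) z = m x z + m y z
  smul_left : ∀ (c : F) (x y : A), m (c • x) y = c • m x y
  comm : ∀ x y : A, m x y = m y x
  jordan : ∀ x y : A, m (m x x) (m y x) = m (m (m x x) y) x

theorem key_identity {F : Type*} [Field F]
    {R : Type*} [CommRing R] [Algebra F R]
    (Δ : R →ₗ[F] R) (hΔ : ∀ a b : R, Δ (a * b) = Δ a * b + a * Δ b)
    (x y : R) :
    (x * Δ x + x * Δ x) * Δ (y * Δ x + x * Δ y) + (y * Δ x + x * Δ y) * Δ (x * Δ x + x * Δ x)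
      + (2 : F) • Δ (y * (x * x) * Δ (Δ x))
    = ((x * Δ x + x * Δ x) * Δ y + y * Δ (x * Δ x + x * Δ x)) * Δ x +
      x * Δ ((x * Δ x + x * Δ x) * Δ y + y * Δ (x * Δ x + x * Δ x)) := by
  simp only [map_add, hΔ, two_smul]
  ring

/-- for a derivation `Δ` of a commutative associative algebra over a
field of characteristic ≠ 2, `a∘b = aΔ(b) + bΔ(a)` is a Jordan multiplication iff
`Δ(b·a²·Δ²(a)) = 0` for all `a, b`. -/
theorem stmt2 {F : Type*} [Field F] (h2 : (2 : F) ≠ 0)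
    {R : Type*} [CommRing R] [Algebra F R]
    (Δ : R →ₗ[F] R) (hΔ : ∀ a b : R, Δ (a * b) = Δ a * b + a * Δ b) :
    IsJordanMul F (fun a b => a * Δ b + b * Δ a) ↔
      ∀ a b : R, Δ (b * (a * a) * Δ (Δ a)) = 0 := by
  constructor
  · intro H a b
    have hk := key_identity Δ hΔ a b
    have hj := H.jordan a b
    have h0 : (2 : F) • Δ (b * (a * a) * Δ (Δ a)) = 0 := by
      rw [hj] at hk
      exact add_eq_left.mp hk
    rcases smul_eq_zero.mp h0 with h | h
    · exact absurd h h2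
    · exact h
  · intro hz
    refine ⟨?_, ?_, ?_, ?_⟩
    · intro x y z; simp only [map_add]; ring
    · intro c x y
      rw [map_smul]
      simp only [Algebra.smul_def]; ring
    · intro x y; ring
    · intro x y
      have hk := key_identity Δ hΔ x y
      rw [hz x y, smul_zero, add_zero] at hk
      simpa using hk
end

section
/- Let 𝒜 be a commutative associative algebra over a field F with char F ≠ 2 and let ω be an involution of 𝒜 (an algebra homomorphism ω : 𝒜 → 𝒜 with ω∘ω = id). Define a∘_ω b = aω(b) + bω(a). Then (𝒜, ∘_ω) is a Jordan algebra if and only if (a − ω(a))(b − ω(b)) = 0 for all a, b ∈ 𝒜. -/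
/-- for an involution `ω` of a commutative associative algebra over a
field of characteristic ≠ 2, `a∘b = aω(b) + bω(a)` is a Jordan multiplication iff
`(a − ω(a))(b − ω(b)) = 0` for all `a, b`. -/
theorem stmt3 {F : Type*} [Field F] (h2 : (2 : F) ≠ 0)
    {R : Type*} [CommRing R] [Algebra F R]
    (ω : R →ₐ[F] R) (hω : ∀ a : R, ω (ω a) = a) :
    IsJordanMul F (fun a b => a * ω b + b * ω a) ↔
      ∀ a b : R, (a - ω a) * (b - ω b) = 0 := by
  constructor
  · intro hJ a b
    have cancel2 : ∀ r : R, (2 : F) • r = 0 → r = 0 := by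
      intro r hr
      have := congrArg (fun s => (2 : F)⁻¹ • s) hr
      simpa [smul_smul, inv_mul_cancel₀ h2] using this
    have key : ∀ x y : R, x * ω x * ((x - ω x) * (y - ω y)) = 0 := by
      intro x y
      apply cancel2
      have h := hJ.jordan x y
      simp only [map_mul, map_add, hω] at h
      rw [two_smul]
      linear_combination -h
    have k1 := key a b
    have k2 := key (a + 1) b
    have k3 := key (1 - a) b
    simp only [map_add, map_sub, map_one] at k2 k3
    apply cancel2
    rw [two_smul]
    linear_combination k2 - k3 - 2 * k1
  · intro H
    refine ⟨?_, ?_, ?_, ?_⟩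
    · intro x y z; simp only [map_add]; ring
    · intro c x y
      simp only [map_smul, smul_mul_assoc, mul_smul_comm, smul_add]
    · intro x y; ring
    · intro x y
      simp only [map_mul, map_add, hω]
      linear_combination (-2 * (x * ω x)) * H x y
end

section
/- Let A be a ternary Jordan algebra over a field F and let 𝒜 be a commutative associative F-algebra. On the tensor product Ã = A ⊗ 𝒜 define the trilinear multiplication [[x⊗a, y⊗b, z⊗c]]' = [[x,y,z]] ⊗ (abc). Then (Ã, [[·,·,·]]') is a ternary Jordan algebra. Moreover, if A is perfect (i.e. the span of all [[x,y,z]] equals A) and 𝒜 is unital, then Ã is perfect. -/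
/-- A ternary Jordan algebra structure: a totally symmetric trilinear multiplication
`t` on a vector space such that every commutator of right multiplication operators
is a derivation. -/
structure IsTernaryJordan (F : Type*) [Field F] {A : Type*} [AddCommGroup A]
    [Module F A] (t : A → A → A → A) : Prop where
  add_left : ∀ x y z w : A, t (x + y) z w = t x z w + t y z w
  smul_left : ∀ (c : F) (x y z : A), t (c • x) y z = c • t x y z
  symm12 : ∀ x y z : A, t x y z = t y x z
  symm23 : ∀ x y z : A, t x y z = t x z y
  comm_der : ∀ x₂ x₃ y₂ y₃ a b c : A,
    t (t (t a b c) x₂ x₃) y₂ y₃ - t (t (t a b c) y₂ y₃) x₂ x₃ =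
      t (t (t a x₂ x₃) y₂ y₃ - t (t a y₂ y₃) x₂ x₃) b c +
        t a (t (t b x₂ x₃) y₂ y₃ - t (t b y₂ y₃) x₂ x₃) c +
          t a b (t (t c x₂ x₃) y₂ y₃ - t (t c y₂ y₃) x₂ x₃)

open scoped TensorProduct

/-- the tensor product of a ternary Jordan algebra with a commutative
associative algebra, with `[[x⊗a,y⊗b,z⊗c]]' = [[x,y,z]]⊗(abc)`, is a ternary Jordan
algebra; it is perfect when `A` is perfect and the associative algebra is unital. -/
theorem stmt4 {F : Type*} [Field F] {A : Type*} [AddCommGroup A] [Module F A]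
    (t : A → A → A → A) (ht : IsTernaryJordan F t)
    {R : Type*} [NonUnitalCommRing R] [Module F R] [SMulCommClass F R R]
    [IsScalarTower F R R]
    (t' : A ⊗[F] R → A ⊗[F] R → A ⊗[F] R → A ⊗[F] R)
    (h_addl : ∀ p q r s, t' (p + q) r s = t' p r s + t' q r s)
    (h_addm : ∀ p q r s, t' p (q + r) s = t' p q s + t' p r s)
    (h_addr : ∀ p q r s, t' p q (r + s) = t' p q r + t' p q s)
    (h_smull : ∀ (c : F) (p q r), t' (c • p) q r = c • t' p q r)
    (h_smulm : ∀ (c : F) (p q r), t' p (c • q) r = c • t' p q r)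
    (h_smulr : ∀ (c : F) (p q r), t' p q (c • r) = c • t' p q r)
    (h_pure : ∀ (x y z : A) (a b c : R),
      t' (x ⊗ₜ[F] a) (y ⊗ₜ[F] b) (z ⊗ₜ[F] c) = t x y z ⊗ₜ[F] (a * b * c)) :
    IsTernaryJordan F t' ∧
      (Submodule.span F {w : A | ∃ x y z : A, w = t x y z} = ⊤ →
        (∃ e : R, ∀ a : R, e * a = a) →
        Submodule.span F {w : A ⊗[F] R | ∃ p q r, w = t' p q r} = ⊤) := by
  have h_zerol : ∀ q r, t' 0 q r = 0 := by
    intro q r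
    have := h_smull 0 0 q r
    simpa using this
  have h_zerom : ∀ p r, t' p 0 r = 0 := by
    intro p r
    have := h_smulm 0 p 0 r
    simpa using this
  have h_zeror : ∀ p q, t' p q 0 = 0 := by
    intro p q
    have := h_smulr 0 p q 0
    simpa using this
  have h_subl : ∀ p q r s, t' (p - q) r s = t' p r s - t' q r s := by
    intro p q r s
    rw [sub_eq_add_neg, h_addl, ← neg_one_smul F q, h_smull, neg_one_smul, ← sub_eq_add_neg]
  have h_subm : ∀ p q r s, t' p (q - r) s = t' p q s - t' p r s := by
    intro p q r s
    rw [sub_eq_add_neg, h_addm, ← neg_one_smul F r, h_smulm, neg_one_smul, ← sub_eq_add_neg]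
  have h_subr : ∀ p q r s, t' p q (r - s) = t' p q r - t' p q s := by
    intro p q r s
    rw [sub_eq_add_neg, h_addr, ← neg_one_smul F s, h_smulr, neg_one_smul, ← sub_eq_add_neg]
  have t_subl : ∀ x y z w : A, t (x - y) z w = t x z w - t y z w := by
    intro x y z w
    rw [sub_eq_add_neg, ht.add_left, ← neg_one_smul F y, ht.smul_left, neg_one_smul,
      ← sub_eq_add_neg]
  have t_subm : ∀ x y z w : A, t x (y - z) w = t x y w - t x z w := by
    intro x y z w
    rw [ht.symm12 x (y - z) w, t_subl, ht.symm12 y x w, ht.symm12 z x w]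
  have t_subr : ∀ x y z w : A, t x y (z - w) = t x y z - t x y w := by
    intro x y z w
    rw [ht.symm23 x y (z - w), t_subm, ht.symm23 x z y, ht.symm23 x w y]
  have hsymm12 : ∀ p q r, t' p q r = t' q p r := by
    intro p q r
    induction p using TensorProduct.induction_on with
    | zero => simp [h_zerol, h_zerom]
    | add p₁ p₂ ih₁ ih₂ => rw [h_addl, h_addm, ih₁, ih₂]
    | tmul x a =>
      induction q using TensorProduct.induction_on with
      | zero => simp [h_zerol, h_zerom]
      | add q₁ q₂ ih₁ ih₂ => rw [h_addl, h_addm, ih₁, ih₂]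
      | tmul y b =>
        induction r using TensorProduct.induction_on with
        | zero => simp [h_zeror]
        | add r₁ r₂ ih₁ ih₂ => rw [h_addr, h_addr, ih₁, ih₂]
        | tmul z c => rw [h_pure, h_pure, ht.symm12, mul_comm a b]
  have hsymm23 : ∀ p q r, t' p q r = t' p r q := by
    intro p q r
    induction p using TensorProduct.induction_on with
    | zero => simp [h_zerol]
    | add p₁ p₂ ih₁ ih₂ => rw [h_addl, h_addl, ih₁, ih₂]
    | tmul x a =>
      induction q using TensorProduct.induction_on with
      | zero => simp [h_zerom, h_zeror]
      | add q₁ q₂ ih₁ ih₂ => rw [h_addm, h_addr, ih₁, ih₂]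
      | tmul y b =>
        induction r using TensorProduct.induction_on with
        | zero => simp [h_zerom, h_zeror]
        | add r₁ r₂ ih₁ ih₂ => rw [h_addr, h_addm, ih₁, ih₂]
        | tmul z c => rw [h_pure, h_pure, ht.symm23, mul_right_comm a b c]
  have hcomm : ∀ x₂ x₃ y₂ y₃ a b c : A ⊗[F] R,
      t' (t' (t' a b c) x₂ x₃) y₂ y₃ - t' (t' (t' a b c) y₂ y₃) x₂ x₃ =
        t' (t' (t' a x₂ x₃) y₂ y₃ - t' (t' a y₂ y₃) x₂ x₃) b c +
          t' a (t' (t' b x₂ x₃) y₂ y₃ - t' (t' b y₂ y₃) x₂ x₃) c +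
            t' a b (t' (t' c x₂ x₃) y₂ y₃ - t' (t' c y₂ y₃) x₂ x₃) := by
    intro x₂ x₃ y₂ y₃ a b c
    induction x₂ using TensorProduct.induction_on with
    | zero => simp [h_zerol, h_zerom, h_zeror]
    | add u v ih₁ ih₂ =>
        simp only [h_addl, h_addm, h_addr, h_subl, h_subm, h_subr] at ih₁ ih₂ ⊢
        linear_combination (norm := abel) ih₁ + ih₂
    | tmul u₂ p₂ =>
      induction x₃ using TensorProduct.induction_on with
      | zero => simp [h_zerol, h_zerom, h_zeror]
      | add u v ih₁ ih₂ =>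
          simp only [h_addl, h_addm, h_addr, h_subl, h_subm, h_subr] at ih₁ ih₂ ⊢
          linear_combination (norm := abel) ih₁ + ih₂
      | tmul u₃ p₃ =>
        induction y₂ using TensorProduct.induction_on with
        | zero => simp [h_zerol, h_zerom, h_zeror]
        | add u v ih₁ ih₂ =>
            simp only [h_addl, h_addm, h_addr, h_subl, h_subm, h_subr] at ih₁ ih₂ ⊢
            linear_combination (norm := abel) ih₁ + ih₂
        | tmul v₂ q₂ =>
          induction y₃ using TensorProduct.induction_on with
          | zero => simp [h_zerol, h_zerom, h_zeror]
          | add u v ih₁ ih₂ =>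
              simp only [h_addl, h_addm, h_addr, h_subl, h_subm, h_subr] at ih₁ ih₂ ⊢
              linear_combination (norm := abel) ih₁ + ih₂
          | tmul v₃ q₃ =>
            induction a using TensorProduct.induction_on with
            | zero => simp [h_zerol, h_zerom, h_zeror]
            | add u v ih₁ ih₂ =>
                simp only [h_addl, h_addm, h_addr, h_subl, h_subm, h_subr] at ih₁ ih₂ ⊢
                linear_combination (norm := abel) ih₁ + ih₂
            | tmul xa α =>
              induction b using TensorProduct.induction_on with
              | zero => simp [h_zerol, h_zerom, h_zeror]
              | add u v ih₁ ih₂ =>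
                  simp only [h_addl, h_addm, h_addr, h_subl, h_subm, h_subr] at ih₁ ih₂ ⊢
                  linear_combination (norm := abel) ih₁ + ih₂
              | tmul xb β =>
                induction c using TensorProduct.induction_on with
                | zero => simp [h_zerol, h_zerom, h_zeror]
                | add u v ih₁ ih₂ =>
                    simp only [h_addl, h_addm, h_addr, h_subl, h_subm, h_subr] at ih₁ ih₂ ⊢
                    linear_combination (norm := abel) ih₁ + ih₂
                | tmul xc γ =>
                    have key0 := ht.comm_der u₂ u₃ v₂ v₃ xa xb xc
                    simp only [t_subl, t_subm, t_subr] at key0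
                    have key := congrArg
                      (fun w => w ⊗ₜ[F] (α * β * γ * p₂ * p₃ * q₂ * q₃)) key0
                    simp only [TensorProduct.sub_tmul, TensorProduct.add_tmul] at key
                    simp only [h_subl, h_subm, h_subr, h_pure]
                    simp only [mul_comm, mul_left_comm, mul_assoc] at key ⊢
                    linear_combination (norm := abel) key
  refine ⟨⟨h_addl, h_smull, hsymm12, hsymm23, hcomm⟩, ?_⟩
  rintro hA ⟨e, he⟩
  rw [eq_top_iff]
  rintro w -
  induction w using TensorProduct.induction_on with
  | zero => exact Submodule.zero_mem _
  | add u v hu hv => exact Submodule.add_mem _ hu hv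
  | tmul x a =>
    have hae : a * e * e = a := by rw [mul_comm a e, he a, mul_comm a e, he a]
    have hx : x ∈ Submodule.span F {w : A | ∃ x y z : A, w = t x y z} := by
      rw [hA]; trivial
    have hle : Submodule.span F {w : A | ∃ x y z : A, w = t x y z} ≤
        (Submodule.span F {w : A ⊗[F] R | ∃ p q r, w = t' p q r}).comap
          ((TensorProduct.mk F A R).flip a) := by
      rw [Submodule.span_le]
      rintro w ⟨x, y, z, rfl⟩
      simp only [Set.mem_setOf_eq, SetLike.mem_coe, Submodule.mem_comap,
        LinearMap.flip_apply, TensorProduct.mk_apply]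
      exact Submodule.subset_span ⟨x ⊗ₜ a, y ⊗ₜ e, z ⊗ₜ e, by rw [h_pure, hae]⟩
    exact hle hx
end

section
/- Let A be a ternary Jordan algebra over a field F with char F ≠ 2, 3. Then GDer(A), QDer(A), QΓ(A) and Γ(A) are Lie subalgebras of the general linear Lie algebra gl(A): each is a linear subspace of End(A) closed under the commutator bracket [f,g] = f∘g − g∘f. -/
/-- A generalized derivation of the ternary algebra `(A, t)`. -/
def IsGDer (F : Type*) [Field F] {A : Type*} [AddCommGroup A] [Module F A]
    (t : A → A → A → A) (f₁ : A →ₗ[F] A) : Prop :=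
  ∃ f₂ f₃ f' : A →ₗ[F] A, ∀ x y z : A,
    t (f₁ x) y z + t x (f₂ y) z + t x y (f₃ z) = f' (t x y z)
/-- A quasiderivation of the ternary algebra `(A, t)`. -/
def IsQDer (F : Type*) [Field F] {A : Type*} [AddCommGroup A] [Module F A]
    (t : A → A → A → A) (f : A →ₗ[F] A) : Prop :=
  ∃ f' : A →ₗ[F] A, ∀ x y z : A,
    t (f x) y z + t x (f y) z + t x y (f z) = f' (t x y z)
/-- Membership in the centroid of the ternary algebra `(A, t)`. -/
def IsCent (F : Type*) [Field F] {A : Type*} [AddCommGroup A] [Module F A]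
    (t : A → A → A → A) (f : A →ₗ[F] A) : Prop :=
  ∀ x y z : A, t (f x) y z = t x (f y) z ∧ t x (f y) z = t x y (f z) ∧
    t x y (f z) = f (t x y z)
/-- Membership in the quasicentroid of the ternary algebra `(A, t)`. -/
def IsQCent (F : Type*) [Field F] {A : Type*} [AddCommGroup A] [Module F A]
    (t : A → A → A → A) (f : A →ₗ[F] A) : Prop :=
  ∀ x y z : A, t (f x) y z = t x (f y) z ∧ t x (f y) z = t x y (f z)

/-- A set `S` of linear endomorphisms is a Lie subalgebra of `gl(A)`: it is a linear
subspace of `End(A)` closed under the commutator bracket. -/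
def IsLieSubalgebraOfEnd (F : Type*) [Field F] {A : Type*} [AddCommGroup A]
    [Module F A] (S : (A →ₗ[F] A) → Prop) : Prop :=
  S 0 ∧ (∀ f g, S f → S g → S (f + g)) ∧ (∀ (c : F) (f), S f → S (c • f)) ∧
    ∀ f g, S f → S g → S (f ∘ₗ g - g ∘ₗ f)

section Helpers

variable {F : Type*} [Field F] {A : Type*} [AddCommGroup A] [Module F A]
  {t : A → A → A → A}

lemma TJ.zero1 (ht : IsTernaryJordan F t) (y z : A) : t 0 y z = 0 := by
  simpa using ht.smul_left (0 : F) 0 y z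

lemma TJ.add2 (ht : IsTernaryJordan F t) (x y y' z : A) :
    t x (y + y') z = t x y z + t x y' z := by
  calc t x (y + y') z = t (y + y') x z := ht.symm12 ..
    _ = t y x z + t y' x z := ht.add_left ..
    _ = t x y z + t x y' z := by rw [ht.symm12 y x z, ht.symm12 y' x z]

lemma TJ.add3 (ht : IsTernaryJordan F t) (x y z z' : A) :
    t x y (z + z') = t x y z + t x y z' := by
  calc t x y (z + z') = t x (z + z') y := ht.symm23 ..
    _ = t x z y + t x z' y := TJ.add2 ht ..
    _ = t x y z + t x y z' := by rw [ht.symm23 x z y, ht.symm23 x z' y]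

lemma TJ.smul2 (ht : IsTernaryJordan F t) (c : F) (x y z : A) :
    t x (c • y) z = c • t x y z := by
  calc t x (c • y) z = t (c • y) x z := ht.symm12 ..
    _ = c • t y x z := ht.smul_left ..
    _ = c • t x y z := by rw [ht.symm12 y x z]

lemma TJ.smul3 (ht : IsTernaryJordan F t) (c : F) (x y z : A) :
    t x y (c • z) = c • t x y z := by
  calc t x y (c • z) = t x (c • z) y := ht.symm23 ..
    _ = c • t x z y := TJ.smul2 ht ..
    _ = c • t x y z := by rw [ht.symm23 x z y]

lemma TJ.zero2 (ht : IsTernaryJordan F t) (x z : A) : t x 0 z = 0 := by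
  rw [ht.symm12]; exact TJ.zero1 ht x z

lemma TJ.zero3 (ht : IsTernaryJordan F t) (x y : A) : t x y 0 = 0 := by
  rw [ht.symm23]; exact TJ.zero2 ht x y

lemma TJ.sub1 (ht : IsTernaryJordan F t) (a b y z : A) :
    t (a - b) y z = t a y z - t b y z := by
  have h : t (a - b + b) y z = t (a - b) y z + t b y z := ht.add_left ..
  rw [sub_add_cancel] at h
  exact eq_sub_of_add_eq h.symm

lemma TJ.sub2 (ht : IsTernaryJordan F t) (x a b z : A) :
    t x (a - b) z = t x a z - t x b z := by
  rw [ht.symm12, TJ.sub1 ht, ht.symm12 a x z, ht.symm12 b x z]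

lemma TJ.sub3 (ht : IsTernaryJordan F t) (x y a b : A) :
    t x y (a - b) = t x y a - t x y b := by
  rw [ht.symm23, TJ.sub2 ht, ht.symm23 x a y, ht.symm23 x b y]

lemma TJ.rot (ht : IsTernaryJordan F t) (x y w : A) : t x y w = t w x y := by
  rw [ht.symm23, ht.symm12]

/-- Key cancellation: for `f g` in the quasicentroid, `t ((fg-gf)x) y z = 0`. -/
lemma TJ.qcent_key (ht : IsTernaryJordan F t) (h2 : (2 : F) ≠ 0)
    (f g : A →ₗ[F] A) (hf : IsQCent F t f) (hg : IsQCent F t g) (x y z : A) :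
    t (f (g x)) y z - t (g (f x)) y z = 0 := by
  set u : A → A → A → A := fun x y z => t (f (g x)) y z - t (g (f x)) y z with hu
  have anti : ∀ a b c : A, u a b c = - u b a c := by
    intro a b c
    have h1 : t (f (g a)) b c = t a (g (f b)) c :=
      ((hf (g a) b c).1).trans ((hg a (f b) c).1)
    have h2' : t (g (f a)) b c = t a (f (g b)) c :=
      ((hg (f a) b c).1).trans ((hf a (g b) c).1)
    simp only [hu, h1, h2', ht.symm12 a (g (f b)) c, ht.symm12 a (f (g b)) c]
    abel
  have s23 : ∀ a b c : A, u a b c = u a c b := by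
    intro a b c
    simp only [hu, ht.symm23 (f (g a)) b c, ht.symm23 (g (f a)) b c]
  have neg : u x y z = - u x y z := by
    calc u x y z = - u y x z := anti ..
      _ = - u y z x := by rw [s23]
      _ = u z y x := by rw [anti y z x, neg_neg]
      _ = u z x y := s23 ..
      _ = - u x z y := by rw [anti x z y, neg_neg]
      _ = - u x y z := by rw [s23]
  have h2s : (2 : F) • u x y z = 0 := by
    rw [two_smul]
    nth_rewrite 2 [neg]
    simp
  have := congrArg (fun v => (2 : F)⁻¹ • v) h2s
  simpa [smul_smul, inv_mul_cancel₀ h2] using this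

lemma TJ.qcent_bracket_zero (ht : IsTernaryJordan F t) (h2 : (2 : F) ≠ 0)
    (f g : A →ₗ[F] A) (hf : IsQCent F t f) (hg : IsQCent F t g) (x y z : A) :
    t ((f ∘ₗ g - g ∘ₗ f) x) y z = 0 := by
  simp only [LinearMap.sub_apply, LinearMap.comp_apply]
  rw [TJ.sub1 ht]
  exact TJ.qcent_key ht h2 f g hf hg x y z

end Helpers

/-- `GDer(A)`, `QDer(A)`, `QΓ(A)` and `Γ(A)` are Lie subalgebras of
`gl(A)`. -/
theorem stmt5 {F : Type*} [Field F] {A : Type*} [AddCommGroup A] [Module F A]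
    (h2 : (2 : F) ≠ 0) (h3 : (3 : F) ≠ 0)
    (t : A → A → A → A) (ht : IsTernaryJordan F t) :
    IsLieSubalgebraOfEnd F (IsGDer F t) ∧ IsLieSubalgebraOfEnd F (IsQDer F t) ∧
      IsLieSubalgebraOfEnd F (IsQCent F t) ∧ IsLieSubalgebraOfEnd F (IsCent F t) := by
  refine ⟨⟨?_, ?_, ?_, ?_⟩, ⟨?_, ?_, ?_, ?_⟩, ⟨?_, ?_, ?_, ?_⟩, ⟨?_, ?_, ?_, ?_⟩⟩
  -- GDer zero
  · exact ⟨0, 0, 0, fun x y z => by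
      simp [TJ.zero1 ht, TJ.zero2 ht, TJ.zero3 ht]⟩
  -- GDer add
  · rintro f g ⟨f₂, f₃, f', hf⟩ ⟨g₂, g₃, g', hg⟩
    refine ⟨f₂ + g₂, f₃ + g₃, f' + g', fun x y z => ?_⟩
    simp only [LinearMap.add_apply]
    rw [ht.add_left, TJ.add2 ht, TJ.add3 ht, ← hf x y z, ← hg x y z]
    abel
  -- GDer smul
  · rintro c f ⟨f₂, f₃, f', hf⟩
    refine ⟨c • f₂, c • f₃, c • f', fun x y z => ?_⟩
    simp only [LinearMap.smul_apply]
    rw [ht.smul_left, TJ.smul2 ht, TJ.smul3 ht, ← smul_add, ← smul_add, hf x y z]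
  -- GDer bracket
  · rintro f g ⟨f₂, f₃, f', hf⟩ ⟨g₂, g₃, g', hg⟩
    refine ⟨f₂ ∘ₗ g₂ - g₂ ∘ₗ f₂, f₃ ∘ₗ g₃ - g₃ ∘ₗ f₃, f' ∘ₗ g' - g' ∘ₗ f',
      fun x y z => ?_⟩
    have e1 : f' (g' (t x y z)) =
        t (f (g x)) y z + t (g x) (f₂ y) z + t (g x) y (f₃ z)
          + (t (f x) (g₂ y) z + t x (f₂ (g₂ y)) z + t x (g₂ y) (f₃ z))
          + (t (f x) y (g₃ z) + t x (f₂ y) (g₃ z) + t x y (f₃ (g₃ z))) := by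
      rw [← hg x y z, map_add, map_add, ← hf (g x) y z, ← hf x (g₂ y) z,
        ← hf x y (g₃ z)]
    have e2 : g' (f' (t x y z)) =
        t (g (f x)) y z + t (f x) (g₂ y) z + t (f x) y (g₃ z)
          + (t (g x) (f₂ y) z + t x (g₂ (f₂ y)) z + t x (f₂ y) (g₃ z))
          + (t (g x) y (f₃ z) + t x (g₂ y) (f₃ z) + t x y (g₃ (f₃ z))) := by
      rw [← hf x y z, map_add, map_add, ← hg (f x) y z, ← hg x (f₂ y) z,
        ← hg x y (f₃ z)]
    simp only [LinearMap.sub_apply, LinearMap.comp_apply]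
    rw [TJ.sub1 ht, TJ.sub2 ht, TJ.sub3 ht, e1, e2]
    abel
  -- QDer zero
  · exact ⟨0, fun x y z => by
      simp [TJ.zero1 ht, TJ.zero2 ht, TJ.zero3 ht]⟩
  -- QDer add
  · rintro f g ⟨f', hf⟩ ⟨g', hg⟩
    refine ⟨f' + g', fun x y z => ?_⟩
    simp only [LinearMap.add_apply]
    rw [ht.add_left, TJ.add2 ht, TJ.add3 ht, ← hf x y z, ← hg x y z]
    abel
  -- QDer smul
  · rintro c f ⟨f', hf⟩
    refine ⟨c • f', fun x y z => ?_⟩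
    simp only [LinearMap.smul_apply]
    rw [ht.smul_left, TJ.smul2 ht, TJ.smul3 ht, ← smul_add, ← smul_add, hf x y z]
  -- QDer bracket
  · rintro f g ⟨f', hf⟩ ⟨g', hg⟩
    refine ⟨f' ∘ₗ g' - g' ∘ₗ f', fun x y z => ?_⟩
    have e1 : f' (g' (t x y z)) =
        t (f (g x)) y z + t (g x) (f y) z + t (g x) y (f z)
          + (t (f x) (g y) z + t x (f (g y)) z + t x (g y) (f z))
          + (t (f x) y (g z) + t x (f y) (g z) + t x y (f (g z))) := by
      rw [← hg x y z, map_add, map_add, ← hf (g x) y z, ← hf x (g y) z,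
        ← hf x y (g z)]
    have e2 : g' (f' (t x y z)) =
        t (g (f x)) y z + t (f x) (g y) z + t (f x) y (g z)
          + (t (g x) (f y) z + t x (g (f y)) z + t x (f y) (g z))
          + (t (g x) y (f z) + t x (g y) (f z) + t x y (g (f z))) := by
      rw [← hf x y z, map_add, map_add, ← hg (f x) y z, ← hg x (f y) z,
        ← hg x y (f z)]
    simp only [LinearMap.sub_apply, LinearMap.comp_apply]
    rw [TJ.sub1 ht, TJ.sub2 ht, TJ.sub3 ht, e1, e2]
    abel
  -- QCent zero
  · intro x y z
    simp [TJ.zero1 ht, TJ.zero2 ht, TJ.zero3 ht]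
  -- QCent add
  · intro f g hf hg x y z
    constructor
    · simp only [LinearMap.add_apply]
      rw [ht.add_left, TJ.add2 ht, (hf x y z).1, (hg x y z).1]
    · simp only [LinearMap.add_apply]
      rw [TJ.add2 ht, TJ.add3 ht, (hf x y z).2, (hg x y z).2]
  -- QCent smul
  · intro c f hf x y z
    constructor
    · simp only [LinearMap.smul_apply]
      rw [ht.smul_left, TJ.smul2 ht, (hf x y z).1]
    · simp only [LinearMap.smul_apply]
      rw [TJ.smul2 ht, TJ.smul3 ht, (hf x y z).2]
  -- QCent bracket
  · intro f g hf hg x y z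
    have k1 := TJ.qcent_bracket_zero ht h2 f g hf hg
    constructor
    · rw [k1 x y z, ht.symm12, k1 y x z]
    · rw [ht.symm12 x ((f ∘ₗ g - g ∘ₗ f) y) z, k1 y x z, TJ.rot ht x y _, k1 z x y]
  -- Cent zero
  · intro x y z
    simp [TJ.zero1 ht, TJ.zero2 ht, TJ.zero3 ht]
  -- Cent add
  · intro f g hf hg x y z
    refine ⟨?_, ?_, ?_⟩
    · simp only [LinearMap.add_apply]
      rw [ht.add_left, TJ.add2 ht, (hf x y z).1, (hg x y z).1]
    · simp only [LinearMap.add_apply]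
      rw [TJ.add2 ht, TJ.add3 ht, (hf x y z).2.1, (hg x y z).2.1]
    · simp only [LinearMap.add_apply]
      rw [TJ.add3 ht, (hf x y z).2.2, (hg x y z).2.2]
  -- Cent smul
  · intro c f hf x y z
    refine ⟨?_, ?_, ?_⟩
    · simp only [LinearMap.smul_apply]
      rw [ht.smul_left, TJ.smul2 ht, (hf x y z).1]
    · simp only [LinearMap.smul_apply]
      rw [TJ.smul2 ht, TJ.smul3 ht, (hf x y z).2.1]
    · simp only [LinearMap.smul_apply]
      rw [TJ.smul3 ht, (hf x y z).2.2]
  -- Cent bracket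
  · intro f g hf hg x y z
    have hfq : IsQCent F t f := fun a b c => ⟨(hf a b c).1, (hf a b c).2.1⟩
    have hgq : IsQCent F t g := fun a b c => ⟨(hg a b c).1, (hg a b c).2.1⟩
    have k1 := TJ.qcent_bracket_zero ht h2 f g hfq hgq
    have e2 : t x ((f ∘ₗ g - g ∘ₗ f) y) z = 0 := by
      rw [ht.symm12 x ((f ∘ₗ g - g ∘ₗ f) y) z, k1 y x z]
    have e3 : t x y ((f ∘ₗ g - g ∘ₗ f) z) = 0 := by
      rw [TJ.rot ht x y _, k1 z x y]
    have e4 : (f ∘ₗ g - g ∘ₗ f) (t x y z) = 0 := by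
      simp only [LinearMap.sub_apply, LinearMap.comp_apply]
      have hfg : f (g (t x y z)) = t x y (f (g z)) := by
        rw [← (hg x y z).2.2, ← (hf x y (g z)).2.2]
      have hgf : g (f (t x y z)) = t x y (g (f z)) := by
        rw [← (hf x y z).2.2, ← (hg x y (f z)).2.2]
      rw [hfg, hgf, ← TJ.sub3 ht]
      have : f (g z) - g (f z) = (f ∘ₗ g - g ∘ₗ f) z := by
        simp [LinearMap.sub_apply, LinearMap.comp_apply]
      rw [this]
      exact e3
    exact ⟨by rw [k1 x y z, e2], by rw [e2, e3], by rw [e3, e4]⟩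
end

section
/- Let A be a ternary Jordan algebra over a field F with char F ≠ 2, 3, and write [f,g] = f∘g − g∘f. Then: (1) [Der(A), Γ(A)] ⊆ Γ(A); (2) [QDer(A), QΓ(A)] ⊆ QΓ(A); (3) [QΓ(A), QΓ(A)] ⊆ QDer(A); (4) Γ(A) ⊆ QDer(A); (5) QΓ(A) ⊆ GDer(A); (6) Γ(A)∘Der(A) ⊆ Der(A) (the composition f∘g of f ∈ Γ(A) and g ∈ Der(A) is a derivation); (7) Γ(A) ⊆ QDer(A) ∩ QΓ(A). -/
/-- A derivation of the ternary algebra `(A, t)`. -/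
def IsTDer (F : Type*) [Field F] {A : Type*} [AddCommGroup A] [Module F A]
    (t : A → A → A → A) (D : A →ₗ[F] A) : Prop :=
  ∀ x y z : A, D (t x y z) = t (D x) y z + t x (D y) z + t x y (D z)
/-- elementary inclusions between `Der(A)`, `GDer(A)`, `QDer(A)`,
`Γ(A)` and `QΓ(A)`. -/
theorem stmt7 {F : Type*} [Field F] {A : Type*} [AddCommGroup A] [Module F A]
    (h2 : (2 : F) ≠ 0) (h3 : (3 : F) ≠ 0)
    (t : A → A → A → A) (ht : IsTernaryJordan F t) :
    (∀ f g : A →ₗ[F] A, IsTDer F t f → IsCent F t g →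
      IsCent F t (f ∘ₗ g - g ∘ₗ f)) ∧
    (∀ f g : A →ₗ[F] A, IsQDer F t f → IsQCent F t g →
      IsQCent F t (f ∘ₗ g - g ∘ₗ f)) ∧
    (∀ f g : A →ₗ[F] A, IsQCent F t f → IsQCent F t g →
      IsQDer F t (f ∘ₗ g - g ∘ₗ f)) ∧
    (∀ f : A →ₗ[F] A, IsCent F t f → IsQDer F t f) ∧
    (∀ f : A →ₗ[F] A, IsQCent F t f → IsGDer F t f) ∧
    (∀ f g : A →ₗ[F] A, IsCent F t f → IsTDer F t g → IsTDer F t (f ∘ₗ g)) ∧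
    (∀ f : A →ₗ[F] A, IsCent F t f → IsQDer F t f ∧ IsQCent F t f) := by

  obtain ⟨addl, smull, s12, s23, _⟩ := ht
  -- basic consequences
  have zero1 : ∀ y z : A, t 0 y z = 0 := by
    intro y z
    have := smull 0 0 y z
    simpa using this
  have neg1 : ∀ x y z : A, t (-x) y z = - t x y z := by
    intro x y z
    have := smull (-1) x y z
    simpa using this
  have sub1 : ∀ a b y z : A, t (a - b) y z = t a y z - t b y z := by
    intro a b y z
    rw [sub_eq_add_neg, addl, neg1, ← sub_eq_add_neg]
  have sub2 : ∀ x a b z : A, t x (a - b) z = t x a z - t x b z := by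
    intro x a b z
    rw [s12, sub1, s12 a, s12 b]
  -- Γ helpers: from first-slot property derive full centroid property
  have centOf : ∀ h : A →ₗ[F] A, (∀ x y z, t (h x) y z = h (t x y z)) →
      IsCent F t h := by
    intro h H x y z
    have e2 : t x (h y) z = h (t x y z) := by
      rw [s12, H, s12 y x z]
    have e3 : t x y (h z) = h (t x y z) := by
      rw [s23, s12, H]
      rw [show t z x y = t x y z by rw [s12, s23]]
    exact ⟨H x y z |>.trans e2.symm, e2.trans e3.symm, e3⟩
  have qcentOf : ∀ h : A →ₗ[F] A, (∀ x y z, t (h x) y z = t x (h y) z) →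
      IsQCent F t h := by
    intro h H x y z
    have e3 : t x y (h z) = t (h y) x z := by
      rw [s23 x y (h z), s12 x (h z) y, H z x y, s12 z (h x) y, s23 (h x) z y,
        H x y z, s12 x (h y) z]
    exact ⟨H x y z, (s12 x (h y) z).trans e3.symm⟩
  refine ⟨?p1, ?p2, ?p3, ?p4, ?p5, ?p6, ?p7⟩
  case p1 =>
    intro f g hf hg
    have g1 : ∀ x y z, t (g x) y z = g (t x y z) := fun x y z =>
      (hg x y z).1.trans ((hg x y z).2.1.trans (hg x y z).2.2)
    apply centOf
    intro x y z
    simp only [LinearMap.sub_apply, LinearMap.comp_apply]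
    rw [sub1]
    have hfe := hf (g x) y z
    rw [g1 x y z] at hfe
    rw [g1 x (f y) z, g1 x y (f z)] at hfe
    have hge : g (f (t x y z)) =
        g (t (f x) y z) + g (t x (f y) z) + g (t x y (f z)) := by
      rw [hf x y z, map_add, map_add]
    rw [hfe, hge, g1 (f x) y z]
    abel
  case p2 =>
    intro f g hf hg
    obtain ⟨f', R⟩ := hf
    have q1 : ∀ a b c, t (g a) b c = t a (g b) c := fun a b c => (hg a b c).1
    apply qcentOf
    intro x y z
    simp only [LinearMap.sub_apply, LinearMap.comp_apply]
    rw [sub1, sub2]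
    have h0 := R (g x) y z
    rw [q1 x y z] at h0
    have h1 := R x (g y) z
    have e2 : t (g (f x)) y z = t (f x) (g y) z := q1 (f x) y z
    have e3 : t x (g (f y)) z = t (g x) (f y) z := (q1 x (f y) z).symm
    rw [e2, e3]
    have h5 := h0.trans h1.symm
    rw [q1 x y (f z)] at h5
    have h6 := add_right_cancel h5
    rw [sub_eq_sub_iff_add_eq_add, h6]
    exact add_comm _ _
  case p3 =>
    intro f g hf hg
    have q1g : ∀ a b c, t (g a) b c = t a (g b) c := fun a b c => (hg a b c).1
    have q13f : ∀ a b c, t (f a) b c = t a b (f c) := fun a b c =>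
      (hf a b c).1.trans (hf a b c).2
    have Z : ∀ a b c : A, t (f (g a) - g (f a)) b c = 0 := by
      intro a b c
      rw [sub1, q13f (g a) b c, q1g a b (f c), q1g (f a) b c, q13f a (g b) c,
        sub_self]
    refine ⟨0, fun x y z => ?_⟩
    simp only [LinearMap.sub_apply, LinearMap.comp_apply, LinearMap.zero_apply]
    rw [Z x y z, s12 x (f (g y) - g (f y)) z, Z y x z,
      s23 x y (f (g z) - g (f z)), s12 x (f (g z) - g (f z)) y, Z z x y]
    simp
  case p4 =>
    intro f hf
    refine ⟨f + f + f, fun x y z => ?_⟩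
    have e1 : t (f x) y z = f (t x y z) :=
      (hf x y z).1.trans ((hf x y z).2.1.trans (hf x y z).2.2)
    have e2 : t x (f y) z = f (t x y z) :=
      (hf x y z).2.1.trans (hf x y z).2.2
    have e3 : t x y (f z) = f (t x y z) := (hf x y z).2.2
    simp [e1, e2, e3]
  case p5 =>
    intro f hf
    refine ⟨-f, 0, 0, fun x y z => ?_⟩
    have z3 : t x y (0 : A) = 0 := by rw [s23, s12, zero1]
    simp only [LinearMap.neg_apply, LinearMap.zero_apply, z3]
    rw [show t x (-(f y)) z = - t x (f y) z by rw [s12, neg1, s12],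
      (hf x y z).1]
    abel
  case p6 =>
    intro f g hf hg
    have c1 : ∀ x y z, t (f x) y z = f (t x y z) := fun x y z =>
      (hf x y z).1.trans ((hf x y z).2.1.trans (hf x y z).2.2)
    have c2 : ∀ x y z, t x (f y) z = f (t x y z) := fun x y z =>
      (hf x y z).2.1.trans (hf x y z).2.2
    have c3 : ∀ x y z, t x y (f z) = f (t x y z) := fun x y z => (hf x y z).2.2
    intro x y z
    simp only [LinearMap.comp_apply]
    rw [hg x y z, map_add, map_add, ← c1, ← c2, ← c3]
  case p7 =>
    intro f hf
    refine ⟨?_, fun x y z => ⟨(hf x y z).1, (hf x y z).2.1⟩⟩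
    refine ⟨f + f + f, fun x y z => ?_⟩
    have e1 : t (f x) y z = f (t x y z) :=
      (hf x y z).1.trans ((hf x y z).2.1.trans (hf x y z).2.2)
    have e2 : t x (f y) z = f (t x y z) :=
      (hf x y z).2.1.trans (hf x y z).2.2
    have e3 : t x y (f z) = f (t x y z) := (hf x y z).2.2
    simp [e1, e2, e3]
end

section
/- Let A be a ternary Jordan algebra over a field F with char F ≠ 2, 3. Then GDer(A) = QDer(A) + QΓ(A): every generalized derivation of A is the sum of a quasiderivation and an element of the quasicentroid, and conversely every such sum is a generalized derivation. -/
/-- `GDer(A) = QDer(A) + QΓ(A)`. -/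
theorem stmt8 {F : Type*} [Field F] {A : Type*} [AddCommGroup A] [Module F A]
    (h2 : (2 : F) ≠ 0) (h3 : (3 : F) ≠ 0)
    (t : A → A → A → A) (ht : IsTernaryJordan F t) :
    ∀ f : A →ₗ[F] A, IsGDer F t f ↔
      ∃ q h : A →ₗ[F] A, IsQDer F t q ∧ IsQCent F t h ∧ f = q + h := by

  obtain ⟨hadd, hsmul, h12, h23, -⟩ := ht
  have h13 : ∀ x y z : A, t x y z = t z y x := fun x y z => by
    rw [h12, h23, h12]
  have hneg : ∀ a y z : A, t (-a) y z = -(t a y z) := fun a y z => by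
    simpa using hsmul (-1 : F) a y z
  have hsub : ∀ a b y z : A, t (a - b) y z = t a y z - t b y z := fun a b y z => by
    rw [sub_eq_add_neg, hadd, hneg, sub_eq_add_neg]
  have hadd2 : ∀ x a b z : A, t x (a + b) z = t x a z + t x b z := fun x a b z => by
    rw [h12, hadd, h12 a, h12 b]
  have hadd3 : ∀ x y a b : A, t x y (a + b) = t x y a + t x y b := fun x y a b => by
    rw [h13, hadd, h13 a, h13 b]
  have hsub2 : ∀ x a b z : A, t x (a - b) z = t x a z - t x b z := fun x a b z => by
    rw [h12, hsub, h12 a, h12 b]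
  have hsub3 : ∀ x y a b : A, t x y (a - b) = t x y a - t x y b := fun x y a b => by
    rw [h13, hsub, h13 a, h13 b]
  have hsm2 : ∀ (c : F) (x a z : A), t x (c • a) z = c • t x a z := fun c x a z => by
    rw [h12, hsmul, h12]
  have hsm3 : ∀ (c : F) (x y a : A), t x y (c • a) = c • t x y a := fun c x y a => by
    rw [h13, hsmul, h13]
  intro f
  constructor
  · rintro ⟨f₂, f₃, f', hP⟩
    have c2 : ∀ x y z : A, t (f x - f₂ x) y z = t x (f y - f₂ y) z := by
      intro x y z
      have e1 := hP x y z
      have e2 := hP y x z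
      rw [h12 (f y) x z, h12 y x (f₃ z), h12 y x z, h12 y (f₂ x) z] at e2
      rw [hsub, hsub2, sub_eq_sub_iff_add_eq_add]
      exact add_right_cancel (e1.trans e2.symm)
    have c3 : ∀ x y z : A, t (f x - f₃ x) y z = t x y (f z - f₃ z) := by
      intro x y z
      have e1 := hP x y z
      have e3 := hP z y x
      rw [h13 (f z) y x, h13 z y (f₃ x), h13 z y x, h13 z (f₂ y) x] at e3
      rw [hsub, hsub3, sub_eq_sub_iff_add_eq_add]
      have h' := e1.trans e3.symm
      rw [add_right_comm (t (f x) y z), add_right_comm (t x y (f z))] at h'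
      exact add_right_cancel h'
    have c2' : ∀ x y z : A, t x (f y - f₂ y) z = t x y (f z - f₂ z) := by
      intro x y z
      calc t x (f y - f₂ y) z = t z (f y - f₂ y) x := h13 _ _ _
        _ = t (f z - f₂ z) y x := (c2 z y x).symm
        _ = t x y (f z - f₂ z) := h13 _ _ _
    have c3' : ∀ x y z : A, t (f x - f₃ x) y z = t x (f y - f₃ y) z := by
      intro x y z
      calc t (f x - f₃ x) y z = t (f x - f₃ x) z y := h23 _ _ _
        _ = t x z (f y - f₃ y) := c3 x z y
        _ = t x (f y - f₃ y) z := (h23 x (f y - f₃ y) z).symm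
    refine ⟨(3:F)⁻¹ • (f + f₂ + f₃), f - (3:F)⁻¹ • (f + f₂ + f₃), ⟨f', ?_⟩, ?_, by abel⟩
    · intro x y z
      have e1 := hP x y z
      have e5 := hP y z x
      rw [h13 (f y) z x, h23 x z (f y), h23 y (f₂ z) x, h12 y x (f₂ z),
        h13 y z (f₃ x), h23 (f₃ x) z y, h13 y z x, h23 x z y] at e5
      have e6 := hP z x y
      rw [h13 (f z) x y, h12 y x (f z), h12 z (f₂ x) y, h23 (f₂ x) z y,
        h12 z x (f₃ y), h23 x z (f₃ y), h12 z x y, h23 x z y] at e6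
      have key : (t (f x) y z + t x (f₂ y) z + t x y (f₃ z)) +
          (t x (f y) z + t x y (f₂ z) + t (f₃ x) y z) +
          (t x y (f z) + t (f₂ x) y z + t x (f₃ y) z) =
          f' (t x y z) + f' (t x y z) + f' (t x y z) := by
        rw [e1, e5, e6]
      have main : t (f x + f₂ x + f₃ x) y z + t x (f y + f₂ y + f₃ y) z +
          t x y (f z + f₂ z + f₃ z) =
          f' (t x y z) + f' (t x y z) + f' (t x y z) := by
        rw [hadd, hadd, hadd2, hadd2, hadd3, hadd3, ← key]
        abel
      simp only [LinearMap.smul_apply, LinearMap.add_apply]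
      rw [hsmul, hsm2, hsm3, ← smul_add, ← smul_add, main,
        show f' (t x y z) + f' (t x y z) + f' (t x y z) = (3:F) • f' (t x y z) from by
          rw [show (3:F) = (1:F)+1+1 from by norm_num, add_smul, add_smul, one_smul],
        smul_smul, inv_mul_cancel₀ h3, one_smul]
    · have hx : ∀ a : A, (f - (3:F)⁻¹ • (f + f₂ + f₃)) a =
          (3:F)⁻¹ • ((f a - f₂ a) + (f a - f₃ a)) := by
        intro a
        simp only [LinearMap.sub_apply, LinearMap.smul_apply, LinearMap.add_apply]
        match_scalars <;> field_simp <;> ring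
      intro x y z
      constructor
      · rw [hx x, hx y, hsmul, hsm2, hadd, hadd2, c2 x y z, c3' x y z]
      · rw [hx y, hx z, hsm2, hsm3, hadd2, hadd3, c2' x y z, ← c3' x y z, c3 x y z]
  · rintro ⟨q, k, ⟨f', hq⟩, hk, rfl⟩
    refine ⟨q - k, q, f', fun x y z => ?_⟩
    simp only [LinearMap.add_apply, LinearMap.sub_apply]
    rw [hadd, hsub2, (hk x y z).1, ← hq x y z]
    abel
end

section
/- Let A be a ternary Jordan algebra over a field F with char F ≠ 2, 3. Then QΓ(A) is an ideal of the Lie algebra GDer(A): [f,g] = f∘g − g∘f ∈ QΓ(A) for all f ∈ QΓ(A) and g ∈ GDer(A). Moreover, if Z(A) = {0}, then QΓ(A) is an abelian ideal of GDer(A) ([f,g] = 0 for all f,g ∈ QΓ(A)). -/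
/-- `QΓ(A)` is an ideal of the Lie algebra `GDer(A)`; if `Z(A) = 0`
then it is an abelian ideal. -/
theorem stmt9 {F : Type*} [Field F] {A : Type*} [AddCommGroup A] [Module F A]
    (h2 : (2 : F) ≠ 0) (h3 : (3 : F) ≠ 0)
    (t : A → A → A → A) (ht : IsTernaryJordan F t) :
    (∀ f g : A →ₗ[F] A, IsQCent F t f → IsGDer F t g →
      IsQCent F t (f ∘ₗ g - g ∘ₗ f)) ∧
    ((∀ z : A, (∀ x y : A, t x y z = 0) → z = 0) →
      ∀ f g : A →ₗ[F] A, IsQCent F t f → IsQCent F t g →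
        f ∘ₗ g - g ∘ₗ f = 0) := by

  obtain ⟨tadd, tsmul, s12, s23, _⟩ := ht
  have tneg : ∀ u y z : A, t (-u) y z = -t u y z := by
    intro u y z
    rw [← neg_one_smul F u, tsmul, neg_one_smul]
  have tsub : ∀ u v y z : A, t (u - v) y z = t u y z - t v y z := by
    intro u v y z
    rw [sub_eq_add_neg, tadd, tneg, ← sub_eq_add_neg]
  have tsub2 : ∀ (x u v z : A), t x (u - v) z = t x u z - t x v z := by
    intro x u v z
    rw [s12 x (u - v) z, tsub, ← s12 x u z, ← s12 x v z]
  have tsub3 : ∀ (x y u v : A), t x y (u - v) = t x y u - t x y v := by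
    intro x y u v
    rw [s23 x y (u - v), tsub2, s23 x u y, s23 x v y]
  constructor
  · rintro f g hf ⟨g₂, g₃, g', hg⟩
    have hf1 : ∀ a b c : A, t (f a) b c = t a (f b) c := fun a b c => (hf a b c).1
    have hf2 : ∀ a b c : A, t a (f b) c = t a b (f c) := fun a b c => (hf a b c).2
    have hf13 : ∀ a b c : A, t (f a) b c = t a b (f c) :=
      fun a b c => (hf1 a b c).trans (hf2 a b c)
    have hgE : ∀ a b c : A,
        t (g a) b c = g' (t a b c) - t a (g₂ b) c - t a b (g₃ c) := by
      intro a b c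
      rw [← hg a b c]; abel
    have keyL : ∀ x y z : A, t (f (g x)) y z - t (g (f x)) y z
        = t x (f y) (g₃ z) - t x y (g₃ (f z)) := by
      intro x y z
      calc t (f (g x)) y z - t (g (f x)) y z
          = t (g x) y (f z)
            - (g' (t (f x) y z) - t (f x) (g₂ y) z - t (f x) y (g₃ z)) := by
            rw [hf13 (g x) y z, hgE (f x) y z]
        _ = (g' (t x y (f z)) - t x (g₂ y) (f z) - t x y (g₃ (f z)))
            - (g' (t x y (f z)) - t x (g₂ y) (f z) - t x (f y) (g₃ z)) := by
            rw [hgE x y (f z), hf13 x y z, hf13 x (g₂ y) z, hf1 x y (g₃ z)]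
        _ = t x (f y) (g₃ z) - t x y (g₃ (f z)) := by abel
    have keyR : ∀ x y z : A, t x (f (g y)) z - t x (g (f y)) z
        = t x (f y) (g₃ z) - t x y (g₃ (f z)) := by
      intro x y z
      calc t x (f (g y)) z - t x (g (f y)) z
          = t x (g y) (f z) - t (g (f y)) x z := by
            rw [hf2 x (g y) z, s12 x (g (f y)) z]
        _ = t (g y) x (f z)
            - (g' (t (f y) x z) - t (f y) (g₂ x) z - t (f y) x (g₃ z)) := by
            rw [s12 x (g y) (f z), hgE (f y) x z]
        _ = (g' (t y x (f z)) - t y (g₂ x) (f z) - t y x (g₃ (f z)))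
            - (g' (t y x (f z)) - t y (g₂ x) (f z) - t y (f x) (g₃ z)) := by
            rw [hgE y x (f z), hf13 y x z, hf13 y (g₂ x) z, hf1 y x (g₃ z)]
        _ = t y (f x) (g₃ z) - t y x (g₃ (f z)) := by abel
        _ = t x (f y) (g₃ z) - t x y (g₃ (f z)) := by
            rw [s12 y (f x) (g₃ z), hf1 x y (g₃ z), s12 y x (g₃ (f z))]
    have key : ∀ x y z : A,
        t (f (g x) - g (f x)) y z = t x (f (g y) - g (f y)) z := by
      intro x y z
      rw [tsub, tsub2, keyL, keyR]
    intro x y z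
    simp only [LinearMap.sub_apply, LinearMap.comp_apply]
    refine ⟨key x y z, ?_⟩
    calc t x (f (g y) - g (f y)) z
        = t (f (g y) - g (f y)) x z := s12 _ _ _
      _ = t (f (g y) - g (f y)) z x := s23 _ _ _
      _ = t y (f (g z) - g (f z)) x := key y z x
      _ = t y x (f (g z) - g (f z)) := s23 _ _ _
      _ = t x y (f (g z) - g (f z)) := s12 _ _ _
  · intro hZ f g hf hg
    have hf1 : ∀ a b c : A, t (f a) b c = t a (f b) c := fun a b c => (hf a b c).1
    have hf2 : ∀ a b c : A, t a (f b) c = t a b (f c) := fun a b c => (hf a b c).2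
    have hg1 : ∀ a b c : A, t (g a) b c = t a (g b) c := fun a b c => (hg a b c).1
    have hg2 : ∀ a b c : A, t a (g b) c = t a b (g c) := fun a b c => (hg a b c).2
    have hg13 : ∀ a b c : A, t (g a) b c = t a b (g c) :=
      fun a b c => (hg1 a b c).trans (hg2 a b c)
    apply LinearMap.ext
    intro w
    simp only [LinearMap.sub_apply, LinearMap.comp_apply, LinearMap.zero_apply]
    apply hZ
    intro x y
    rw [tsub3, sub_eq_zero]
    calc t x y (f (g w))
        = t x (f y) (g w) := (hf2 x y (g w)).symm
      _ = t (g x) (f y) w := (hg13 x (f y) w).symm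
      _ = t (g x) y (f w) := hf2 (g x) y w
      _ = t x (g y) (f w) := hg1 x y (f w)
      _ = t x y (g (f w)) := hg2 x y (f w)
end

section
/- Let A be a ternary Jordan algebra over a field F with char F ≠ 2, 3. Then ZDer(A) = Γ(A) ∩ Der(A): a linear map f : A → A is a center derivation if and only if it is both an element of the centroid and a derivation. -/
/-- `ZDer(A) = Γ(A) ∩ Der(A)`. -/
theorem stmt12 {F : Type*} [Field F] {A : Type*} [AddCommGroup A] [Module F A]
    (h2 : (2 : F) ≠ 0) (h3 : (3 : F) ≠ 0)
    (t : A → A → A → A) (ht : IsTernaryJordan F t) :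
    ∀ f : A →ₗ[F] A,
      ((∀ x y z : A, f (t x y z) = 0) ∧ ∀ a x y : A, t x y (f a) = 0) ↔
        IsCent F t f ∧ IsTDer F t f := by
  intro f
  constructor
  · rintro ⟨hz, ha⟩
    constructor
    · intro x y z
      have h1 : t (f x) y z = 0 := by rw [ht.symm12, ht.symm23]; exact ha x y z
      have h2' : t x (f y) z = 0 := by rw [ht.symm23]; exact ha y x z
      refine ⟨by rw [h1, h2'], by rw [h2', ha], by rw [ha, hz]⟩
    · intro x y z
      have h1 : t (f x) y z = 0 := by rw [ht.symm12, ht.symm23]; exact ha x y z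
      have h2' : t x (f y) z = 0 := by rw [ht.symm23]; exact ha y x z
      rw [hz, h1, h2', ha, add_zero, add_zero]
  · rintro ⟨hc, hd⟩
    have key : ∀ x y z : A, f (t x y z) = 0 := by
      intro x y z
      have e := hd x y z
      obtain ⟨c1, c2, c3⟩ := hc x y z
      rw [c1, c2, c3] at e
      have hsum : f (t x y z) + f (t x y z) = 0 := by
        have e' : f (t x y z) + f (t x y z) + f (t x y z)
            = 0 + f (t x y z) := by rw [zero_add]; exact e.symm
        exact add_right_cancel e'
      have h2s : (2 : F) • f (t x y z) = 0 := by rw [two_smul]; exact hsum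
      rcases smul_eq_zero.mp h2s with h | h
      · exact absurd h h2
      · exact h
    exact ⟨key, fun a x y => by
      obtain ⟨_, _, c3⟩ := hc x y a
      rw [c3, key]⟩
end

section
/- Let A be a ternary Jordan algebra over a field F with char F ≠ 2. Let φ : A⊗A⊗A → A be the linear map determined by φ(x⊗y⊗z) = [[x,y,z]], and for a linear map D : A → A let D* : A⊗A⊗A → A⊗A⊗A be the linear map determined by D*(x⊗y⊗z) = D(x)⊗y⊗z + x⊗D(y)⊗z + x⊗y⊗D(z). Then D is a quasiderivation of A if and only if D*(Ker φ) ⊆ Ker φ. -/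
open scoped TensorProduct

/-- `D` is a quasiderivation iff `D*` preserves the kernel of the
multiplication map `φ : A⊗A⊗A → A`. -/
theorem stmt14 {F : Type*} [Field F] {A : Type*} [AddCommGroup A] [Module F A]
    (h2 : (2 : F) ≠ 0)
    (t : A → A → A → A) (ht : IsTernaryJordan F t)
    (φ : A ⊗[F] (A ⊗[F] A) →ₗ[F] A)
    (hφ : ∀ x y z : A, φ (x ⊗ₜ[F] (y ⊗ₜ[F] z)) = t x y z)
    (D : A →ₗ[F] A)
    (Dstar : A ⊗[F] (A ⊗[F] A) →ₗ[F] A ⊗[F] (A ⊗[F] A))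
    (hD : ∀ x y z : A, Dstar (x ⊗ₜ[F] (y ⊗ₜ[F] z)) =
      D x ⊗ₜ[F] (y ⊗ₜ[F] z) + x ⊗ₜ[F] (D y ⊗ₜ[F] z) + x ⊗ₜ[F] (y ⊗ₜ[F] D z)) :
    IsQDer F t D ↔ ∀ w ∈ LinearMap.ker φ, Dstar w ∈ LinearMap.ker φ := by
  constructor
  · rintro ⟨f', hf'⟩ w hw
    have key : ∀ w : A ⊗[F] (A ⊗[F] A), φ (Dstar w) = f' (φ w) := by
      intro w
      induction w using TensorProduct.induction_on with
      | zero => simp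
      | tmul x v =>
        induction v using TensorProduct.induction_on with
        | zero => simp [TensorProduct.tmul_zero]
        | tmul y z =>
          rw [hD, map_add, map_add, hφ, hφ, hφ, hφ, hf']
        | add v v' h1 h2 =>
          rw [TensorProduct.tmul_add, map_add, map_add, map_add, map_add, h1, h2]
      | add u v h1 h2 =>
        rw [map_add, map_add, map_add, map_add, h1, h2]
    rw [LinearMap.mem_ker] at hw ⊢
    rw [key, hw, map_zero]
  · intro hker
    set g : A ⊗[F] (A ⊗[F] A) →ₗ[F] A := φ ∘ₗ Dstar with hg
    have hle : LinearMap.ker φ ≤ LinearMap.ker g := by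
      intro w hw
      exact hker w hw
    set h : (A ⊗[F] (A ⊗[F] A)) ⧸ LinearMap.ker φ →ₗ[F] A :=
      Submodule.liftQ _ g hle with hh
    obtain ⟨q, hq⟩ := Submodule.exists_isCompl (LinearMap.range φ)
    set proj := Submodule.linearProjOfIsCompl _ q hq
    set e := LinearMap.quotKerEquivRange φ with he
    refine ⟨h ∘ₗ (e.symm : LinearMap.range φ →ₗ[F] _) ∘ₗ proj, fun x y z => ?_⟩
    set w : A ⊗[F] (A ⊗[F] A) := x ⊗ₜ[F] (y ⊗ₜ[F] z) with hw
    have hmem : t x y z ∈ LinearMap.range φ := ⟨w, hφ x y z⟩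
    have hproj : proj (t x y z) = ⟨t x y z, hmem⟩ :=
      Submodule.linearProjOfIsCompl_apply_left hq ⟨t x y z, hmem⟩
    have hesymm : e.symm ⟨t x y z, hmem⟩ = Submodule.Quotient.mk w := by
      apply e.injective
      rw [LinearEquiv.apply_symm_apply]
      ext
      simp [he, LinearMap.quotKerEquivRange_apply_mk, hw, hφ]
    calc t (D x) y z + t x (D y) z + t x y (D z)
        = φ (Dstar w) := by
          rw [hD, map_add, map_add, hφ, hφ, hφ]
      _ = h (Submodule.Quotient.mk w) := by
          rw [hh, Submodule.liftQ_apply]; rfl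
      _ = _ := by
          simp only [LinearMap.comp_apply, LinearMap.coe_coe, hproj]
          exact congrArg h hesymm.symm
end

section
/- Let A be a ternary Jordan algebra over a field F such that there do not exist nonzero ideals I, J of A with [[x,u,v]] = 0 for all x ∈ A, u ∈ I, v ∈ J. Then the centroid Γ(A) has no zero divisors: for ψ, φ ∈ Γ(A), if ψ∘φ = 0 then ψ = 0 or φ = 0 (hence Γ(A), which contains the identity map, is an integral domain). -/
/-- if `A` has no nonzero ideals `I, J` with `[[A,I,J]] = 0`, then the
centroid has no zero divisors. -/
theorem stmt16 {F : Type*} [Field F] {A : Type*} [AddCommGroup A] [Module F A]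
    (t : A → A → A → A) (ht : IsTernaryJordan F t)
    (h : ¬ ∃ I J : Submodule F A, I ≠ ⊥ ∧ J ≠ ⊥ ∧
      (∀ a ∈ I, ∀ x y : A, t a x y ∈ I) ∧
      (∀ a ∈ J, ∀ x y : A, t a x y ∈ J) ∧
      ∀ (x : A), ∀ u ∈ I, ∀ v ∈ J, t x u v = 0) :
    ∀ ψ φ : A →ₗ[F] A, IsCent F t ψ → IsCent F t φ → ψ ∘ₗ φ = 0 →
      ψ = 0 ∨ φ = 0 := by
  intro ψ φ hψ hφ hcomp
  by_contra hcon
  push_neg at hcon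
  obtain ⟨hψ0, hφ0⟩ := hcon
  apply h
  refine ⟨LinearMap.range ψ, LinearMap.range φ, ?_, ?_, ?_, ?_, ?_⟩
  · simpa [LinearMap.range_eq_bot] using hψ0
  · simpa [LinearMap.range_eq_bot] using hφ0
  · rintro a ⟨b, rfl⟩ x y
    exact ⟨t b x y, ((hψ b x y).1.trans ((hψ b x y).2.1.trans (hψ b x y).2.2)).symm⟩
  · rintro a ⟨b, rfl⟩ x y
    exact ⟨t b x y, ((hφ b x y).1.trans ((hφ b x y).2.1.trans (hφ b x y).2.2)).symm⟩
  · rintro x u ⟨a, rfl⟩ v ⟨b, rfl⟩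
    have hz : ∀ y z : A, t 0 y z = 0 := by
      intro y z
      have := ht.smul_left 0 0 y z
      simpa using this
    have h0 : ψ (φ b) = 0 := by
      rw [← LinearMap.comp_apply, hcomp, LinearMap.zero_apply]
    rw [(hψ x a (φ b)).2.1, h0, ht.symm23 x a 0, ht.symm12 x 0 a, hz]
end

section
/- Let A be a finite-dimensional simple ternary Jordan algebra over an algebraically closed field F. Then Γ(A) = F·id: every element of the centroid of A is a scalar multiple of the identity map. -/
/-- the centroid of a finite-dimensional simple ternary Jordan algebra
over an algebraically closed field consists of the scalar multiples of the
identity. -/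
theorem stmt17 {F : Type*} [Field F] [IsAlgClosed F] {A : Type*} [AddCommGroup A]
    [Module F A] [FiniteDimensional F A]
    (t : A → A → A → A) (ht : IsTernaryJordan F t)
    (hnz : ∃ x y z : A, t x y z ≠ 0)
    (hsimple : ∀ I : Submodule F A, (∀ a ∈ I, ∀ x y : A, t a x y ∈ I) →
      I = ⊥ ∨ I = ⊤) :
    ∀ f : A →ₗ[F] A, IsCent F t f →
      ∃ c : F, f = c • (LinearMap.id : A →ₗ[F] A) := by
  intro f hf
  obtain ⟨x0, y0, z0, hx0⟩ := hnz
  have hnt : Nontrivial A := ⟨t x0 y0 z0, 0, hx0⟩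
  obtain ⟨c, hc⟩ := Module.End.exists_eigenvalue (f : Module.End F A)
  refine ⟨c, ?_⟩
  have hideal : ∀ a ∈ Module.End.eigenspace (f : Module.End F A) c,
      ∀ x y : A, t a x y ∈ Module.End.eigenspace (f : Module.End F A) c := by
    intro a ha x y
    rw [Module.End.mem_eigenspace_iff] at ha ⊢
    have h1 : t a x y = t x y a := by rw [ht.symm12, ht.symm23]
    have hsm : ∀ b : A, t x y (c • b) = c • t x y b := by
      intro b
      rw [ht.symm23 x y (c • b), ht.symm12 x (c • b) y, ht.smul_left,
        ht.symm12 b x y, ht.symm23 x b y]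
    calc f (t a x y) = f (t x y a) := by rw [h1]
      _ = t x y (f a) := ((hf x y a).2.2).symm
      _ = t x y (c • a) := by rw [ha]
      _ = c • t x y a := hsm a
      _ = c • t a x y := by rw [← h1]
  rcases hsimple _ hideal with h | h
  · exact absurd h hc
  · ext a
    have ha : a ∈ Module.End.eigenspace (f : Module.End F A) c := h ▸ Submodule.mem_top
    rw [Module.End.mem_eigenspace_iff] at ha
    simpa using ha
end

section
/- Let A be a ternary Jordan algebra over a field F and let f be an element of the centroid Γ(A). Then: (1) Ker(f) and Im(f) are ideals of A; (2) if moreover A is finite-dimensional and indecomposable, f ≠ 0, and X² does not divide the minimal polynomial of f, then f is invertible (bijective). -/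
/-- for `f` in the centroid, `Ker f` and `Im f` are ideals; if
moreover `A` is finite-dimensional and indecomposable, `f ≠ 0` and `X²` does not
divide the minimal polynomial of `f`, then `f` is bijective. -/
theorem stmt19 {F : Type*} [Field F] {A : Type*} [AddCommGroup A] [Module F A]
    (t : A → A → A → A) (ht : IsTernaryJordan F t)
    (f : A →ₗ[F] A) (hf : IsCent F t f) :
    ((∀ a ∈ LinearMap.ker f, ∀ x y : A, t a x y ∈ LinearMap.ker f) ∧
      ∀ a ∈ LinearMap.range f, ∀ x y : A, t a x y ∈ LinearMap.range f) ∧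
    (FiniteDimensional F A →
      (¬ ∃ A₁ A₂ : Submodule F A, A₁ ≠ ⊥ ∧ A₂ ≠ ⊥ ∧
          (∀ a ∈ A₁, ∀ x y : A, t a x y ∈ A₁) ∧
          (∀ a ∈ A₂, ∀ x y : A, t a x y ∈ A₂) ∧
          A₁ ⊓ A₂ = ⊥ ∧ A₁ ⊔ A₂ = ⊤) →
      f ≠ 0 → ¬ (Polynomial.X ^ 2 ∣ minpoly F (f : Module.End F A)) →
      Function.Bijective f) := by
  have hzero : ∀ x y : A, t 0 x y = 0 := by
    intro x y
    have := ht.smul_left 0 0 x y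
    simpa using this
  have hfmul : ∀ a x y : A, f (t a x y) = t (f a) x y := by
    intro a x y
    rw [(hf a x y).1, (hf a x y).2.1, (hf a x y).2.2]
  have hkerI : ∀ a ∈ LinearMap.ker f, ∀ x y : A, t a x y ∈ LinearMap.ker f := by
    intro a ha x y
    rw [LinearMap.mem_ker] at ha ⊢
    rw [hfmul, ha, hzero]
  have hrangeI : ∀ a ∈ LinearMap.range f, ∀ x y : A, t a x y ∈ LinearMap.range f := by
    intro a ha x y
    obtain ⟨b, rfl⟩ := ha
    exact ⟨t b x y, hfmul b x y⟩
  refine ⟨⟨hkerI, hrangeI⟩, ?_⟩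
  intro hFD hInd hfne hX2
  set g : Module.End F A := f with hg
  set p := minpoly F g with hp
  have haev : Polynomial.aeval g p = 0 := minpoly.aeval F g
  suffices hinj : Function.Injective f by
    exact ⟨hinj, (LinearMap.injective_iff_surjective).1 hinj⟩
  by_cases hX : Polynomial.X ∣ p
  · obtain ⟨q, hq⟩ := hX
    have hXq : ¬ (Polynomial.X : Polynomial F) ∣ q := by
      intro h
      exact hX2 (by rw [hq, sq]; exact mul_dvd_mul_left _ h)
    obtain ⟨a, b, hab⟩ := (Polynomial.prime_X.coprime_iff_not_dvd).2 hXq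
    have hker2 : ∀ x : A, f (f x) = 0 → f x = 0 := by
      intro x hx
      have hXeq : (Polynomial.X : Polynomial F) = a * Polynomial.X ^ 2 + b * p := by
        rw [hq]
        linear_combination (-Polynomial.X) * hab
      have h1 : g x = (Polynomial.aeval g (a * Polynomial.X ^ 2 + b * p)) x := by
        rw [← hXeq]; simp
      rw [map_add, map_mul, map_mul, haev, mul_zero] at h1
      have h2 : (g ^ 2) x = 0 := hx
      rw [LinearMap.add_apply, LinearMap.zero_apply, add_zero, Module.End.mul_apply,
        Polynomial.aeval_X_pow, h2, map_zero] at h1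
      exact h1
    have hdisj : LinearMap.ker f ⊓ LinearMap.range f = ⊥ := by
      rw [eq_bot_iff]
      rintro x ⟨hx1, y, rfl⟩
      exact hker2 y (LinearMap.mem_ker.mp hx1)
    have hsup : LinearMap.ker f ⊔ LinearMap.range f = ⊤ := by
      apply Submodule.eq_top_of_finrank_eq
      have h3 := Submodule.finrank_sup_add_finrank_inf_eq (LinearMap.ker f) (LinearMap.range f)
      rw [hdisj] at h3
      simp only [finrank_bot, add_zero] at h3
      rw [h3, add_comm]
      exact LinearMap.finrank_range_add_finrank_ker f
    have hker_bot : LinearMap.ker f = ⊥ := by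
      by_contra hk
      exact hInd ⟨LinearMap.ker f, LinearMap.range f, hk,
        fun h => hfne (LinearMap.range_eq_bot.mp h), hkerI, hrangeI, hdisj, hsup⟩
    exact LinearMap.ker_eq_bot.mp hker_bot
  · obtain ⟨a, b, hab⟩ := (Polynomial.prime_X.coprime_iff_not_dvd).2 hX
    rw [← LinearMap.ker_eq_bot, eq_bot_iff] at *
    intro x hx
    have hgx : g x = 0 := hx
    have h1 : x = (Polynomial.aeval g (a * Polynomial.X + b * p)) x := by
      rw [hab]; simp
    rw [map_add, map_mul, map_mul, haev, mul_zero] at h1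
    rw [LinearMap.add_apply, LinearMap.zero_apply, add_zero, Module.End.mul_apply,
      Polynomial.aeval_X, hgx, map_zero] at h1
    simpa using h1
end
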